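/- Assume μ₂ ≥ μ₁. Then for every (i,k,ℓ) ∈ X_diff, D(i,k,ℓ) ≤ i·c + b; that is, D is globally bounded above by the affine function i ↦ i·c + b. -/

import Mathlib

/-- Overall service rate `d(k,ℓ) = k·μ₁ + min(ℓ,C₂)·μ₂`. -/
noncomputable def dRate (C₂ : ℕ) (μ₁ μ₂ : ℝ) (k ℓ : ℕ) : ℝ :=
  (k : ℝ) * μ₁ + ((min ℓ C₂ : ℕ) : ℝ) * μ₂

/-- Membership of `(i,k,ℓ)` in the state space `X`. -/
def memX (C₁ : ℕ) (i k ℓ : ℕ) : Prop :=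
  (i = 0 ∧ k + ℓ < C₁) ∨ k + ℓ = C₁

/-- `v` satisfies the optimality (Bellman) equations of the clearing system.
Terms whose coefficient `k·μ₁` or `min(ℓ,C₂)·μ₂` vanishes contribute `0`,
matching the convention that such summands are omitted. -/
def IsValue (C₁ C₂ : ℕ) (μ₁ μ₂ h₀ h₁ h₂ : ℝ) (v : ℕ → ℕ → ℕ → ℝ) : Prop :=
  v 0 0 0 = 0 ∧
  (∀ k ℓ : ℕ, k + ℓ ≤ C₁ → ¬(k = 0 ∧ ℓ = 0) →
    v 0 k ℓ = ((k : ℝ) * h₁ + (ℓ : ℝ) * h₂) / dRate C₂ μ₁ μ₂ k ℓ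
      + ((k : ℝ) * μ₁ / dRate C₂ μ₁ μ₂ k ℓ) * v 0 (k - 1) ℓ
      + (((min ℓ C₂ : ℕ) : ℝ) * μ₂ / dRate C₂ μ₁ μ₂ k ℓ) * v 0 k (ℓ - 1)) ∧
  (∀ i k ℓ : ℕ, k + ℓ = C₁ →
    v (i + 1) k ℓ =
      (((i : ℝ) + 1) * h₀ + (k : ℝ) * h₁ + (ℓ : ℝ) * h₂) / dRate C₂ μ₁ μ₂ k ℓ
      + ((k : ℝ) * μ₁ / dRate C₂ μ₁ μ₂ k ℓ) *
          min (v i k ℓ) (v i (k - 1) (ℓ + 1))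
      + (((min ℓ C₂ : ℕ) : ℝ) * μ₂ / dRate C₂ μ₁ μ₂ k ℓ) *
          min (v i (k + 1) (ℓ - 1)) (v i k ℓ))

/-- The difference `D(i,k,ℓ) = v(i,k,ℓ) − v(i,k−1,ℓ+1)`. -/
noncomputable def Dv (v : ℕ → ℕ → ℕ → ℝ) (i k ℓ : ℕ) : ℝ :=
  v i k ℓ - v i (k - 1) (ℓ + 1)

lemma minpos' {C₂ : ℕ} (hC₂ : 1 ≤ C₂) (j : ℕ) : 0 < min (j+1) C₂ := by omega

/-- Closed form on the base layer:  `v 0 k ℓ = k h₁/μ₁ + Σ_{j<ℓ} (j+1)h₂/(min(j+1,C₂)μ₂)`. -/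

private lemma min_shift (a b : ℝ) : min a b = b + min (a - b) 0 := by
  rcases le_total a b with h|h
  · rw [min_eq_left h, min_eq_left (by linarith : a - b ≤ (0:ℝ))]; ring
  · rw [min_eq_right h, min_eq_right (by linarith : (0:ℝ) ≤ a - b)]; ring

private lemma min_shift' (a b : ℝ) : min a b = a - max (a - b) 0 := by
  rcases le_total a b with h|h
  · rw [min_eq_left h, max_eq_right (by linarith : a - b ≤ (0:ℝ))]; ring
  · rw [min_eq_right h, max_eq_left (by linarith : (0:ℝ) ≤ a - b)]; ring

private lemma mono_comb {p q x y : ℝ} (hq : 0 ≤ q) (hpq : 0 ≤ p + q) (hxy : x ≤ y) :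
    p * min x 0 + q * x ≤ p * min y 0 + q * y := by
  rcases le_total x 0 with hx|hx <;> rcases le_total y 0 with hy|hy
  · rw [min_eq_left hx, min_eq_left hy]; nlinarith
  · rw [min_eq_left hx, min_eq_right hy]; nlinarith
  · rw [min_eq_right hx, min_eq_left hy]; nlinarith
  · rw [min_eq_right hx, min_eq_right hy]; nlinarith

/-- `bAux ℓ = h₁/μ₁ − (ℓ+1)h₂/(min(ℓ+1,C₂)μ₂)`. -/
noncomputable def bAux (C₂ : ℕ) (μ₁ μ₂ h₁ h₂ : ℝ) (ℓ : ℕ) : ℝ :=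
  h₁ / μ₁ - ((ℓ : ℝ) + 1) * h₂ / (((min (ℓ+1) C₂ : ℕ) : ℝ) * μ₂)

lemma minpos {C₂ : ℕ} (hC₂ : 1 ≤ C₂) (j : ℕ) : 0 < min (j+1) C₂ := by omega

section bAuxLemmas
variable {C₂ : ℕ} {μ₁ μ₂ h₁ h₂ : ℝ} (hC₂ : 1 ≤ C₂) (hμ₂ : 0 < μ₂) (hh₂ : 0 < h₂)

include hC₂ hμ₂ hh₂ in
lemma bAux_le_b (ℓ : ℕ) : bAux C₂ μ₁ μ₂ h₁ h₂ ℓ ≤ h₁ / μ₁ - h₂ / μ₂ := by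
  unfold bAux
  have ha : (0:ℝ) < ((min (ℓ+1) C₂ : ℕ) : ℝ) := by exact_mod_cast minpos hC₂ ℓ
  have hle : ((min (ℓ+1) C₂ : ℕ) : ℝ) ≤ (ℓ:ℝ) + 1 := by
    have : min (ℓ+1) C₂ ≤ ℓ + 1 := min_le_left _ _
    exact_mod_cast this
  have h1 : h₂ / μ₂ ≤ ((ℓ : ℝ) + 1) * h₂ / (((min (ℓ+1) C₂ : ℕ) : ℝ) * μ₂) := by
    rw [div_le_div_iff₀ hμ₂ (by positivity)]
    nlinarith [mul_le_mul_of_nonneg_right hle (le_of_lt (mul_pos hh₂ hμ₂))]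
  linarith

include hC₂ hμ₂ hh₂ in
lemma bAux_succ_le (ℓ : ℕ) : bAux C₂ μ₁ μ₂ h₁ h₂ (ℓ+1) ≤ bAux C₂ μ₁ μ₂ h₁ h₂ ℓ := by
  unfold bAux
  rw [show ℓ+1+1 = ℓ+2 by omega]
  have ha : (0:ℝ) < ((min (ℓ+1) C₂ : ℕ) : ℝ) := by exact_mod_cast minpos hC₂ ℓ
  have hb : (0:ℝ) < ((min (ℓ+2) C₂ : ℕ) : ℝ) := by
    exact_mod_cast minpos hC₂ (ℓ+1)
  have key : ((ℓ:ℝ) + 1) * ((min (ℓ+2) C₂ : ℕ) : ℝ) ≤ ((ℓ:ℝ) + 2) * ((min (ℓ+1) C₂ : ℕ) : ℝ) := by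
    have : (ℓ + 1) * (min (ℓ+2) C₂) ≤ (ℓ + 2) * (min (ℓ+1) C₂) := by
      rcases le_or_gt (ℓ+2) C₂ with h|h
      · rw [min_eq_left h, min_eq_left (by omega)]; ring_nf; omega
      · rw [min_eq_right (by omega), min_eq_right (by omega)]
        exact Nat.mul_le_mul_right _ (by omega)
    exact_mod_cast this
  have h1 : ((ℓ : ℝ) + 1) * h₂ / (((min (ℓ+1) C₂ : ℕ) : ℝ) * μ₂)
      ≤ ((ℓ : ℝ) + 2) * h₂ / (((min (ℓ+2) C₂ : ℕ) : ℝ) * μ₂) := by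
    rw [div_le_div_iff₀ (by positivity) (by positivity)]
    nlinarith [mul_le_mul_of_nonneg_right key (le_of_lt (mul_pos hh₂ hμ₂))]
  have hc : ((ℓ+1 : ℕ) : ℝ) + 1 = (ℓ:ℝ) + 2 := by push_cast; ring
  rw [hc]
  linarith

end bAuxLemmas

private lemma closure_reg2 (K L I μ₁ μ₂ h₀ h₁ h₂ : ℝ)
    (hK : 0 ≤ K) (hL : 0 ≤ L) (hI : 0 ≤ I)
    (hμ₁ : 0 < μ₁) (hμ₂ : 0 < μ₂) (hμ : μ₁ ≤ μ₂) (hh₀ : 0 < h₀) :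
    ((I+1)*h₀ + (K+1)*h₁ + L*h₂) / ((K+1)*μ₁ + L*μ₂)
      - ((I+1)*h₀ + K*h₁ + (L+1)*h₂) / (K*μ₁ + (L+1)*μ₂)
      + (K*μ₁/(K*μ₁+(L+1)*μ₂) + L*μ₂/((K+1)*μ₁+L*μ₂))
        * (I * (h₀/(K+1+L)*(1/μ₁ - 1/μ₂)) + (h₁/μ₁ - h₂/μ₂))
    ≤ (I+1) * (h₀/(K+1+L)*(1/μ₁ - 1/μ₂)) + (h₁/μ₁ - h₂/μ₂) := by
  have hd : 0 < (K+1)*μ₁ + L*μ₂ := by nlinarith [mul_nonneg hL hμ₂.le]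
  have hd' : 0 < K*μ₁ + (L+1)*μ₂ := by nlinarith [mul_nonneg hK hμ₁.le]
  have hS : 0 < K+1+L := by linarith
  have hkey : (I+1) * (h₀/(K+1+L)*(1/μ₁ - 1/μ₂)) + (h₁/μ₁ - h₂/μ₂)
      - (((I+1)*h₀ + (K+1)*h₁ + L*h₂) / ((K+1)*μ₁ + L*μ₂)
      - ((I+1)*h₀ + K*h₁ + (L+1)*h₂) / (K*μ₁ + (L+1)*μ₂)
      + (K*μ₁/(K*μ₁+(L+1)*μ₂) + L*μ₂/((K+1)*μ₁+L*μ₂))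
        * (I * (h₀/(K+1+L)*(1/μ₁ - 1/μ₂)) + (h₁/μ₁ - h₂/μ₂)))
      = (h₀*(μ₂-μ₁)) * (K*μ₁*((K+1)*μ₁+L*μ₂) + L*μ₂*(K*μ₁+(L+1)*μ₂))
        / ((K+1+L)*μ₁*μ₂*(((K+1)*μ₁+L*μ₂)*(K*μ₁+(L+1)*μ₂))) := by
    field_simp
    ring
  have hnum : 0 ≤ (h₀*(μ₂-μ₁)) * (K*μ₁*((K+1)*μ₁+L*μ₂) + L*μ₂*(K*μ₁+(L+1)*μ₂)) := by
    apply mul_nonneg (by nlinarith)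
    have := mul_nonneg (mul_nonneg hK hμ₁.le) hd.le
    have := mul_nonneg (mul_nonneg hL hμ₂.le) hd'.le
    linarith
  have hden : 0 < (K+1+L)*μ₁*μ₂*(((K+1)*μ₁+L*μ₂)*(K*μ₁+(L+1)*μ₂)) := by positivity
  nlinarith [div_nonneg hnum hden.le]

private lemma closure_reg1 (K L I C μ₁ μ₂ h₀ h₁ h₂ : ℝ)
    (hK : 0 ≤ K) (hI : 0 ≤ I) (hC1 : 1 ≤ C) (hCL : C ≤ L)
    (hμ₁ : 0 < μ₁) (hμ₂ : 0 < μ₂) (hμ : μ₁ ≤ μ₂) (hh₀ : 0 < h₀) (hh₂ : 0 < h₂) :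
    ((I+1)*h₀ + (K+1)*h₁ + L*h₂) / ((K+1)*μ₁ + C*μ₂)
      - ((I+1)*h₀ + K*h₁ + (L+1)*h₂) / (K*μ₁ + C*μ₂)
      + (K*μ₁/(K*μ₁+C*μ₂) + C*μ₂/((K+1)*μ₁+C*μ₂))
        * (I * (h₀/(K+1+L)*(1/μ₁ - 1/μ₂)) + (h₁/μ₁ - (L+1)*h₂/(C*μ₂)))
      + h₂/((K+1)*μ₁ + C*μ₂)
    ≤ (I+1) * (h₀/(K+1+L)*(1/μ₁ - 1/μ₂)) + (h₁/μ₁ - (L+1)*h₂/(C*μ₂)) := by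
  have hL : 0 ≤ L := le_trans (by linarith) hCL
  have hd : 0 < (K+1)*μ₁ + C*μ₂ := by nlinarith [mul_nonneg hK hμ₁.le]
  have hd' : 0 < K*μ₁ + C*μ₂ := by nlinarith [mul_nonneg hK hμ₁.le]
  have hS : 0 < K+1+L := by linarith
  have hcnn : 0 ≤ h₀/(K+1+L)*(1/μ₁ - 1/μ₂) := by
    apply mul_nonneg (by positivity)
    have h1 : 1/μ₂ ≤ 1/μ₁ := one_div_le_one_div_of_le hμ₁ hμ
    linarith
  have hkey : (I+1) * (h₀/(K+1+L)*(1/μ₁ - 1/μ₂)) + (h₁/μ₁ - (L+1)*h₂/(C*μ₂))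
      - (((I+1)*h₀ + (K+1)*h₁ + L*h₂) / ((K+1)*μ₁ + C*μ₂)
      - ((I+1)*h₀ + K*h₁ + (L+1)*h₂) / (K*μ₁ + C*μ₂)
      + (K*μ₁/(K*μ₁+C*μ₂) + C*μ₂/((K+1)*μ₁+C*μ₂))
        * (I * (h₀/(K+1+L)*(1/μ₁ - 1/μ₂)) + (h₁/μ₁ - (L+1)*h₂/(C*μ₂)))
      + h₂/((K+1)*μ₁ + C*μ₂))
      = ((h₀/(K+1+L)*(1/μ₁ - 1/μ₂))*(((K+1)*μ₁ + C*μ₂)*(K*μ₁ + C*μ₂))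
         + I*(h₀/(K+1+L)*(1/μ₁ - 1/μ₂))*(C*μ₁*μ₂) + (I+1)*h₀*μ₁)
        / (((K+1)*μ₁ + C*μ₂)*(K*μ₁ + C*μ₂)) := by
    field_simp
    ring
  have hnum : 0 ≤ (h₀/(K+1+L)*(1/μ₁ - 1/μ₂))*(((K+1)*μ₁ + C*μ₂)*(K*μ₁ + C*μ₂))
         + I*(h₀/(K+1+L)*(1/μ₁ - 1/μ₂))*(C*μ₁*μ₂) + (I+1)*h₀*μ₁ := by
    have h1 : 0 ≤ (h₀/(K+1+L)*(1/μ₁ - 1/μ₂))*(((K+1)*μ₁ + C*μ₂)*(K*μ₁ + C*μ₂)) :=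
      mul_nonneg hcnn (by positivity)
    have h2 : 0 ≤ I*(h₀/(K+1+L)*(1/μ₁ - 1/μ₂))*(C*μ₁*μ₂) := by
      apply mul_nonneg (mul_nonneg hI hcnn); positivity
    have h3 : 0 < (I+1)*h₀*μ₁ := by positivity
    linarith
  have hden : 0 < ((K+1)*μ₁ + C*μ₂)*(K*μ₁ + C*μ₂) := by positivity
  nlinarith [div_nonneg hnum hden.le]
private lemma step1 (P1 G De β q : ℝ) (hG : 0 ≤ G) (hDe : 0 ≤ De) (hq : 0 ≤ q)
    (hz : P1 + De = G) :
    P1 * min β 0 + De * β + De * min (β + q) 0 + G * max β 0 ≤ G * β + De * β + De * q := by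
  rcases le_total β 0 with h|h
  · rw [min_eq_left h, max_eq_right h]
    have h1 : min (β+q) 0 ≤ β + q := min_le_left _ _
    nlinarith [mul_le_mul_of_nonneg_left h1 hDe]
  · rw [min_eq_right h, max_eq_left h]
    have h1 : min (β+q) 0 ≤ 0 := min_le_right _ _
    nlinarith [mul_le_mul_of_nonneg_left h1 hDe]

private lemma step2 (P1 G De β : ℝ) (hG : 0 ≤ G) (hDe : 0 ≤ De)
    (hz : P1 + De = G) :
    P1 * min β 0 + De * β + De * min β 0 + G * max β 0 ≤ (G + De) * β := by
  rcases le_total β 0 with h|h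
  · rw [min_eq_left h, max_eq_right h]; nlinarith
  · rw [min_eq_right h, max_eq_left h]; nlinarith
lemma baseClosed (C₁ C₂ : ℕ) (μ₁ μ₂ h₀ h₁ h₂ : ℝ)
    (hC₂ : 1 ≤ C₂) (hμ₁ : 0 < μ₁) (hμ₂ : 0 < μ₂)
    (v : ℕ → ℕ → ℕ → ℝ) (hv : IsValue C₁ C₂ μ₁ μ₂ h₀ h₁ h₂ v) :
    ∀ n k ℓ : ℕ, k + ℓ = n → n ≤ C₁ →
      v 0 k ℓ = (k : ℝ) * h₁ / μ₁ +
        ∑ j ∈ Finset.range ℓ, ((j : ℝ) + 1) * h₂ / (((min (j+1) C₂ : ℕ) : ℝ) * μ₂) := by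
  intro n
  induction n with
  | zero =>
    intro k ℓ hkl _
    obtain ⟨rfl, rfl⟩ : k = 0 ∧ ℓ = 0 := by omega
    simpa using hv.1
  | succ n ih =>
    intro k ℓ hkl hle
    have key := hv.2.1 k ℓ (by omega) (by omega)
    match k, ℓ, hkl with
    | 0, ℓ+1, hkl =>
      -- k = 0 case
      have hm : (0:ℝ) < ((min (ℓ+1) C₂ : ℕ) : ℝ) := by exact_mod_cast minpos' hC₂ ℓ
      have hd : dRate C₂ μ₁ μ₂ 0 (ℓ+1) = ((min (ℓ+1) C₂ : ℕ) : ℝ) * μ₂ := by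
        simp [dRate]
      have hih := ih 0 ℓ (by omega) (by omega)
      rw [key, hd]
      simp only [Nat.add_sub_cancel, Nat.zero_sub]
      rw [hih, Finset.sum_range_succ]
      have hne : ((min (ℓ+1) C₂ : ℕ) : ℝ) * μ₂ ≠ 0 := by positivity
      push_cast
      field_simp
      ring
    | k+1, 0, hkl =>
      have hd : dRate C₂ μ₁ μ₂ (k+1) 0 = ((k:ℝ)+1) * μ₁ := by
        simp [dRate]
      have hih := ih k 0 (by omega) (by omega)
      rw [key, hd]
      simp only [Nat.add_sub_cancel, Nat.zero_sub]
      rw [hih]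
      simp only [Finset.range_zero, Finset.sum_empty, Nat.zero_min, Nat.cast_zero]
      have hne : ((k:ℝ)+1) * μ₁ ≠ 0 := by positivity
      push_cast
      field_simp
      ring
    | k+1, ℓ+1, hkl =>
      have hm : (0:ℝ) < ((min (ℓ+1) C₂ : ℕ) : ℝ) := by exact_mod_cast minpos' hC₂ ℓ
      have hd : (0:ℝ) < dRate C₂ μ₁ μ₂ (k+1) (ℓ+1) := by
        unfold dRate; positivity
      have hih1 := ih k (ℓ+1) (by omega) (by omega)
      have hih2 := ih (k+1) ℓ (by omega) (by omega)
      rw [key]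
      simp only [Nat.add_sub_cancel]
      rw [hih1, hih2, Finset.sum_range_succ]
      unfold dRate
      have hne : ((k:ℝ)+1) * μ₁ + ((min (ℓ+1) C₂ : ℕ) : ℝ) * μ₂ ≠ 0 := by positivity
      push_cast at hne ⊢
      field_simp
      ring

set_option maxHeartbeats 1600000 in
lemma lineBound (C₁ C₂ : ℕ) (hC₂ : 1 ≤ C₂) (hC : C₂ < C₁)
    (μ₁ μ₂ h₀ h₁ h₂ : ℝ)
    (hμ₁ : 0 < μ₁) (hμ₂ : 0 < μ₂) (hh₀ : 0 < h₀) (hh₁ : 0 < h₁) (hh₂ : 0 < h₂)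
    (v : ℕ → ℕ → ℕ → ℝ) (hv : IsValue C₁ C₂ μ₁ μ₂ h₀ h₁ h₂ v) (hμ : μ₁ ≤ μ₂) :
    ∀ i k ℓ : ℕ, k + ℓ = C₁ → 1 ≤ k →
      v i k ℓ - v i (k-1) (ℓ+1) ≤
        (i : ℝ) * (h₀ / (C₁:ℝ) * (1/μ₁ - 1/μ₂)) + bAux C₂ μ₁ μ₂ h₁ h₂ ℓ := by
  intro i
  induction i with
  | zero =>
    intro k ℓ hkl hk
    obtain ⟨k', rfl⟩ : ∃ t, k = t + 1 := ⟨k - 1, by omega⟩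
    simp only [Nat.add_sub_cancel]
    have e1 := baseClosed C₁ C₂ μ₁ μ₂ h₀ h₁ h₂ hC₂ hμ₁ hμ₂ v hv C₁ (k'+1) ℓ hkl le_rfl
    have e2 := baseClosed C₁ C₂ μ₁ μ₂ h₀ h₁ h₂ hC₂ hμ₁ hμ₂ v hv C₁ k' (ℓ+1) (by omega) le_rfl
    rw [e1, e2, Finset.sum_range_succ]
    unfold bAux
    push_cast
    apply le_of_eq
    ring
  | succ i ih =>
    intro k ℓ hkl hk
    obtain ⟨k', rfl⟩ : ∃ t, k = t + 1 := ⟨k - 1, by omega⟩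
    simp only [Nat.add_sub_cancel]
    push_cast
    have hkl2 : k' + (ℓ+1) = C₁ := by omega
    -- positivity of rates
    have hmge : (1:ℝ) ≤ ((min (ℓ+1) C₂ : ℕ) : ℝ) := by exact_mod_cast minpos' hC₂ ℓ
    have hmge0 : (0:ℝ) ≤ ((min ℓ C₂ : ℕ) : ℝ) := Nat.cast_nonneg _
    have hknn : (0:ℝ) ≤ ((k':ℕ):ℝ) := Nat.cast_nonneg _
    have hd : (0:ℝ) < (((k':ℕ):ℝ)+1)*μ₁ + ((min ℓ C₂ : ℕ) : ℝ)*μ₂ := by nlinarith [mul_nonneg hmge0 hμ₂.le]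
    have hd' : (0:ℝ) < ((k':ℕ):ℝ)*μ₁ + ((min (ℓ+1) C₂ : ℕ) : ℝ)*μ₂ := by nlinarith [mul_nonneg hknn hμ₁.le]
    -- Bellman equations
    have E1 := hv.2.2 i (k'+1) ℓ hkl
    have E2 := hv.2.2 i k' (ℓ+1) hkl2
    simp only [Nat.add_sub_cancel, Nat.cast_add, Nat.cast_one] at E1 E2
    have hdR : dRate C₂ μ₁ μ₂ (k'+1) ℓ = (((k':ℕ):ℝ)+1)*μ₁ + ((min ℓ C₂ : ℕ) : ℝ)*μ₂ := by
      unfold dRate; push_cast; ring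
    have hdR' : dRate C₂ μ₁ μ₂ k' (ℓ+1) = ((k':ℕ):ℝ)*μ₁ + ((min (ℓ+1) C₂ : ℕ) : ℝ)*μ₂ := rfl
    rw [hdR] at E1
    rw [hdR'] at E2
    -- induction hypotheses at the three relevant states
    have ihD : v i (k'+1) ℓ - v i k' (ℓ+1) ≤ ((i:ℕ):ℝ)*(h₀ / (C₁:ℝ) * (1/μ₁ - 1/μ₂)) + bAux C₂ μ₁ μ₂ h₁ h₂ ℓ := by
      have h := ih (k'+1) ℓ hkl (by omega)
      simpa only [Nat.add_sub_cancel] using h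
    -- coefficient identities
    have hs1 : (((k':ℕ):ℝ)+1)*μ₁/((((k':ℕ):ℝ)+1)*μ₁ + ((min ℓ C₂ : ℕ) : ℝ)*μ₂) + ((min ℓ C₂ : ℕ) : ℝ)*μ₂/((((k':ℕ):ℝ)+1)*μ₁ + ((min ℓ C₂ : ℕ) : ℝ)*μ₂) = 1 := by
      rw [← add_div]; exact div_self hd.ne'
    have hs2 : ((k':ℕ):ℝ)*μ₁/(((k':ℕ):ℝ)*μ₁ + ((min (ℓ+1) C₂ : ℕ) : ℝ)*μ₂) + ((min (ℓ+1) C₂ : ℕ) : ℝ)*μ₂/(((k':ℕ):ℝ)*μ₁ + ((min (ℓ+1) C₂ : ℕ) : ℝ)*μ₂) = 1 := by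
      rw [← add_div]; exact div_self hd'.ne'
    have hGnn : (0:ℝ) ≤ ((k':ℕ):ℝ)*μ₁/(((k':ℕ):ℝ)*μ₁ + ((min (ℓ+1) C₂ : ℕ) : ℝ)*μ₂) := div_nonneg (mul_nonneg hknn hμ₁.le) hd'.le
    have hDenn : (0:ℝ) ≤ ((min ℓ C₂ : ℕ) : ℝ)*μ₂/((((k':ℕ):ℝ)+1)*μ₁ + ((min ℓ C₂ : ℕ) : ℝ)*μ₂) := div_nonneg (mul_nonneg hmge0 hμ₂.le) hd.le
    have hP1De : (0:ℝ) ≤ ((((k':ℕ):ℝ)+1)*μ₁/((((k':ℕ):ℝ)+1)*μ₁ + ((min ℓ C₂ : ℕ) : ℝ)*μ₂) - ((min (ℓ+1) C₂ : ℕ) : ℝ)*μ₂/(((k':ℕ):ℝ)*μ₁ + ((min (ℓ+1) C₂ : ℕ) : ℝ)*μ₂)) + ((min ℓ C₂ : ℕ) : ℝ)*μ₂/((((k':ℕ):ℝ)+1)*μ₁ + ((min ℓ C₂ : ℕ) : ℝ)*μ₂) := by linarith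
    -- relaxation of the three min-terms
    have hPb : ((min ℓ C₂ : ℕ) : ℝ)*μ₂/((((k':ℕ):ℝ)+1)*μ₁ + ((min ℓ C₂ : ℕ) : ℝ)*μ₂) * min (v i (k'+1+1) (ℓ-1)) (v i (k'+1) ℓ) ≤ ((min ℓ C₂ : ℕ) : ℝ)*μ₂/((((k':ℕ):ℝ)+1)*μ₁ + ((min ℓ C₂ : ℕ) : ℝ)*μ₂) * (v i (k'+1) ℓ) + ((min ℓ C₂ : ℕ) : ℝ)*μ₂/((((k':ℕ):ℝ)+1)*μ₁ + ((min ℓ C₂ : ℕ) : ℝ)*μ₂) * min (((i:ℕ):ℝ)*(h₀ / (C₁:ℝ) * (1/μ₁ - 1/μ₂)) + bAux C₂ μ₁ μ₂ h₁ h₂ (ℓ-1)) 0 := by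
      rcases Nat.eq_zero_or_pos ℓ with h0 | h1
      · have hz : ((min ℓ C₂ : ℕ) : ℝ) = 0 := by rw [h0]; simp
        rw [hz]; simp
      · have hDp : v i (k'+1+1) (ℓ-1) - v i (k'+1) ℓ ≤ ((i:ℕ):ℝ)*(h₀ / (C₁:ℝ) * (1/μ₁ - 1/μ₂)) + bAux C₂ μ₁ μ₂ h₁ h₂ (ℓ-1) := by
          have h := ih (k'+1+1) (ℓ-1) (by omega) (by omega)
          rw [show k'+1+1-1 = k'+1 by omega, Nat.sub_add_cancel h1] at h
          exact h
        have h2 : min (v i (k'+1+1) (ℓ-1) - v i (k'+1) ℓ) 0 ≤ min (((i:ℕ):ℝ)*(h₀ / (C₁:ℝ) * (1/μ₁ - 1/μ₂)) + bAux C₂ μ₁ μ₂ h₁ h₂ (ℓ-1)) 0 := min_le_min hDp le_rfl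
        have h3 := mul_le_mul_of_nonneg_left h2 hDenn
        have h4 : min (v i (k'+1+1) (ℓ-1)) (v i (k'+1) ℓ) = (v i (k'+1) ℓ) + min (v i (k'+1+1) (ℓ-1) - v i (k'+1) ℓ) 0 := min_shift _ _
        rw [h4]
        linarith [h3]
    have hQb : ((k':ℕ):ℝ)*μ₁/(((k':ℕ):ℝ)*μ₁ + ((min (ℓ+1) C₂ : ℕ) : ℝ)*μ₂) * (v i k' (ℓ+1)) - ((k':ℕ):ℝ)*μ₁/(((k':ℕ):ℝ)*μ₁ + ((min (ℓ+1) C₂ : ℕ) : ℝ)*μ₂) * max (((i:ℕ):ℝ)*(h₀ / (C₁:ℝ) * (1/μ₁ - 1/μ₂)) + bAux C₂ μ₁ μ₂ h₁ h₂ ℓ) 0 ≤ ((k':ℕ):ℝ)*μ₁/(((k':ℕ):ℝ)*μ₁ + ((min (ℓ+1) C₂ : ℕ) : ℝ)*μ₂) * min (v i k' (ℓ+1)) (v i (k'-1) (ℓ+1+1)) := by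
      rcases Nat.eq_zero_or_pos k' with h0 | h1
      · have hz : ((k':ℕ):ℝ) = 0 := by rw [h0]; simp
        rw [hz]; simp
      · have hDm : v i k' (ℓ+1) - v i (k'-1) (ℓ+1+1) ≤ ((i:ℕ):ℝ)*(h₀ / (C₁:ℝ) * (1/μ₁ - 1/μ₂)) + bAux C₂ μ₁ μ₂ h₁ h₂ (ℓ+1) := ih k' (ℓ+1) hkl2 h1
        have hble : bAux C₂ μ₁ μ₂ h₁ h₂ (ℓ+1) ≤ bAux C₂ μ₁ μ₂ h₁ h₂ ℓ := bAux_succ_le hC₂ hμ₂ hh₂ ℓ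
        have h2 : max (v i k' (ℓ+1) - v i (k'-1) (ℓ+1+1)) 0 ≤ max (((i:ℕ):ℝ)*(h₀ / (C₁:ℝ) * (1/μ₁ - 1/μ₂)) + bAux C₂ μ₁ μ₂ h₁ h₂ ℓ) 0 :=
          max_le_max (by linarith) le_rfl
        have h3 := mul_le_mul_of_nonneg_left h2 hGnn
        have h4 : min (v i k' (ℓ+1)) (v i (k'-1) (ℓ+1+1)) = (v i k' (ℓ+1)) - max (v i k' (ℓ+1) - v i (k'-1) (ℓ+1+1)) 0 := min_shift' _ _
        rw [h4]
        linarith [h3]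
    have hmono : ((((k':ℕ):ℝ)+1)*μ₁/((((k':ℕ):ℝ)+1)*μ₁ + ((min ℓ C₂ : ℕ) : ℝ)*μ₂) - ((min (ℓ+1) C₂ : ℕ) : ℝ)*μ₂/(((k':ℕ):ℝ)*μ₁ + ((min (ℓ+1) C₂ : ℕ) : ℝ)*μ₂)) * min (v i (k'+1) ℓ - v i k' (ℓ+1)) 0 + ((min ℓ C₂ : ℕ) : ℝ)*μ₂/((((k':ℕ):ℝ)+1)*μ₁ + ((min ℓ C₂ : ℕ) : ℝ)*μ₂) * (v i (k'+1) ℓ - v i k' (ℓ+1))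
        ≤ ((((k':ℕ):ℝ)+1)*μ₁/((((k':ℕ):ℝ)+1)*μ₁ + ((min ℓ C₂ : ℕ) : ℝ)*μ₂) - ((min (ℓ+1) C₂ : ℕ) : ℝ)*μ₂/(((k':ℕ):ℝ)*μ₁ + ((min (ℓ+1) C₂ : ℕ) : ℝ)*μ₂)) * min (((i:ℕ):ℝ)*(h₀ / (C₁:ℝ) * (1/μ₁ - 1/μ₂)) + bAux C₂ μ₁ μ₂ h₁ h₂ ℓ) 0 + ((min ℓ C₂ : ℕ) : ℝ)*μ₂/((((k':ℕ):ℝ)+1)*μ₁ + ((min ℓ C₂ : ℕ) : ℝ)*μ₂) * (((i:ℕ):ℝ)*(h₀ / (C₁:ℝ) * (1/μ₁ - 1/μ₂)) + bAux C₂ μ₁ μ₂ h₁ h₂ ℓ) := mono_comb hDenn hP1De ihD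
    have hWc : ((((k':ℕ):ℝ)+1)*μ₁/((((k':ℕ):ℝ)+1)*μ₁ + ((min ℓ C₂ : ℕ) : ℝ)*μ₂) - ((min (ℓ+1) C₂ : ℕ) : ℝ)*μ₂/(((k':ℕ):ℝ)*μ₁ + ((min (ℓ+1) C₂ : ℕ) : ℝ)*μ₂)) * (v i k' (ℓ+1)) + ((min ℓ C₂ : ℕ) : ℝ)*μ₂/((((k':ℕ):ℝ)+1)*μ₁ + ((min ℓ C₂ : ℕ) : ℝ)*μ₂) * (v i k' (ℓ+1)) - ((k':ℕ):ℝ)*μ₁/(((k':ℕ):ℝ)*μ₁ + ((min (ℓ+1) C₂ : ℕ) : ℝ)*μ₂) * (v i k' (ℓ+1)) = 0 := by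
      have hz : ((((k':ℕ):ℝ)+1)*μ₁/((((k':ℕ):ℝ)+1)*μ₁ + ((min ℓ C₂ : ℕ) : ℝ)*μ₂) - ((min (ℓ+1) C₂ : ℕ) : ℝ)*μ₂/(((k':ℕ):ℝ)*μ₁ + ((min (ℓ+1) C₂ : ℕ) : ℝ)*μ₂)) + ((min ℓ C₂ : ℕ) : ℝ)*μ₂/((((k':ℕ):ℝ)+1)*μ₁ + ((min ℓ C₂ : ℕ) : ℝ)*μ₂) - ((k':ℕ):ℝ)*μ₁/(((k':ℕ):ℝ)*μ₁ + ((min (ℓ+1) C₂ : ℕ) : ℝ)*μ₂) = 0 := by linarith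
      have : ((((k':ℕ):ℝ)+1)*μ₁/((((k':ℕ):ℝ)+1)*μ₁ + ((min ℓ C₂ : ℕ) : ℝ)*μ₂) - ((min (ℓ+1) C₂ : ℕ) : ℝ)*μ₂/(((k':ℕ):ℝ)*μ₁ + ((min (ℓ+1) C₂ : ℕ) : ℝ)*μ₂)) * (v i k' (ℓ+1)) + ((min ℓ C₂ : ℕ) : ℝ)*μ₂/((((k':ℕ):ℝ)+1)*μ₁ + ((min ℓ C₂ : ℕ) : ℝ)*μ₂) * (v i k' (ℓ+1)) - ((k':ℕ):ℝ)*μ₁/(((k':ℕ):ℝ)*μ₁ + ((min (ℓ+1) C₂ : ℕ) : ℝ)*μ₂) * (v i k' (ℓ+1)) = (((((k':ℕ):ℝ)+1)*μ₁/((((k':ℕ):ℝ)+1)*μ₁ + ((min ℓ C₂ : ℕ) : ℝ)*μ₂) - ((min (ℓ+1) C₂ : ℕ) : ℝ)*μ₂/(((k':ℕ):ℝ)*μ₁ + ((min (ℓ+1) C₂ : ℕ) : ℝ)*μ₂)) + ((min ℓ C₂ : ℕ) : ℝ)*μ₂/((((k':ℕ):ℝ)+1)*μ₁ + ((min ℓ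 C₂ : ℕ) : ℝ)*μ₂) - ((k':ℕ):ℝ)*μ₁/(((k':ℕ):ℝ)*μ₁ + ((min (ℓ+1) C₂ : ℕ) : ℝ)*μ₂)) * (v i k' (ℓ+1)) := by ring
      rw [this, hz, zero_mul]
    have hUsplit : ((min ℓ C₂ : ℕ) : ℝ)*μ₂/((((k':ℕ):ℝ)+1)*μ₁ + ((min ℓ C₂ : ℕ) : ℝ)*μ₂) * (v i (k'+1) ℓ) = ((min ℓ C₂ : ℕ) : ℝ)*μ₂/((((k':ℕ):ℝ)+1)*μ₁ + ((min ℓ C₂ : ℕ) : ℝ)*μ₂) * (v i k' (ℓ+1)) + ((min ℓ C₂ : ℕ) : ℝ)*μ₂/((((k':ℕ):ℝ)+1)*μ₁ + ((min ℓ C₂ : ℕ) : ℝ)*μ₂) * (v i (k'+1) ℓ - v i k' (ℓ+1)) := by ring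
    have hexp : v (i+1) (k'+1) ℓ - v (i+1) k' (ℓ+1)
        = ((((i:ℕ):ℝ)+1)*h₀ + (((k':ℕ):ℝ)+1)*h₁ + ((ℓ:ℕ):ℝ)*h₂)/((((k':ℕ):ℝ)+1)*μ₁ + ((min ℓ C₂ : ℕ) : ℝ)*μ₂) - ((((i:ℕ):ℝ)+1)*h₀ + ((k':ℕ):ℝ)*h₁ + (((ℓ:ℕ):ℝ)+1)*h₂)/(((k':ℕ):ℝ)*μ₁ + ((min (ℓ+1) C₂ : ℕ) : ℝ)*μ₂)
          + ((((k':ℕ):ℝ)+1)*μ₁/((((k':ℕ):ℝ)+1)*μ₁ + ((min ℓ C₂ : ℕ) : ℝ)*μ₂) - ((min (ℓ+1) C₂ : ℕ) : ℝ)*μ₂/(((k':ℕ):ℝ)*μ₁ + ((min (ℓ+1) C₂ : ℕ) : ℝ)*μ₂)) * (v i k' (ℓ+1)) + ((((k':ℕ):ℝ)+1)*μ₁/((((k':ℕ):ℝ)+1)*μ₁ + ((min ℓ C₂ : ℕ) : ℝ)*μ₂) - ((min (ℓ+1) C₂ : ℕ) : ℝ)*μ₂/(((k':ℕ):ℝ)*μ₁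 + ((min (ℓ+1) C₂ : ℕ) : ℝ)*μ₂)) * min (v i (k'+1) ℓ - v i k' (ℓ+1)) 0
          + ((min ℓ C₂ : ℕ) : ℝ)*μ₂/((((k':ℕ):ℝ)+1)*μ₁ + ((min ℓ C₂ : ℕ) : ℝ)*μ₂) * min (v i (k'+1+1) (ℓ-1)) (v i (k'+1) ℓ) - ((k':ℕ):ℝ)*μ₁/(((k':ℕ):ℝ)*μ₁ + ((min (ℓ+1) C₂ : ℕ) : ℝ)*μ₂) * min (v i k' (ℓ+1)) (v i (k'-1) (ℓ+1+1)) := by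
      rw [E1, E2, min_shift (v i (k'+1) ℓ) (v i k' (ℓ+1))]; ring
    have hrelax : v (i+1) (k'+1) ℓ - v (i+1) k' (ℓ+1)
        ≤ ((((i:ℕ):ℝ)+1)*h₀ + (((k':ℕ):ℝ)+1)*h₁ + ((ℓ:ℕ):ℝ)*h₂)/((((k':ℕ):ℝ)+1)*μ₁ + ((min ℓ C₂ : ℕ) : ℝ)*μ₂) - ((((i:ℕ):ℝ)+1)*h₀ + ((k':ℕ):ℝ)*h₁ + (((ℓ:ℕ):ℝ)+1)*h₂)/(((k':ℕ):ℝ)*μ₁ + ((min (ℓ+1) C₂ : ℕ) : ℝ)*μ₂)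
          + ((((k':ℕ):ℝ)+1)*μ₁/((((k':ℕ):ℝ)+1)*μ₁ + ((min ℓ C₂ : ℕ) : ℝ)*μ₂) - ((min (ℓ+1) C₂ : ℕ) : ℝ)*μ₂/(((k':ℕ):ℝ)*μ₁ + ((min (ℓ+1) C₂ : ℕ) : ℝ)*μ₂)) * min (((i:ℕ):ℝ)*(h₀ / (C₁:ℝ) * (1/μ₁ - 1/μ₂)) + bAux C₂ μ₁ μ₂ h₁ h₂ ℓ) 0 + ((min ℓ C₂ : ℕ) : ℝ)*μ₂/((((k':ℕ):ℝ)+1)*μ₁ + ((min ℓ C₂ : ℕ) : ℝ)*μ₂) * (((i:ℕ):ℝ)*(h₀ / (C₁:ℝ) * (1/μ₁ - 1/μ₂)) + bAux C₂ μ₁ μ₂ h₁ h₂ ℓ) + ((min ℓ C₂ : ℕ) : ℝ)*μ₂/((((k':ℕ):ℝ)+1)*μ₁ + ((min ℓ C₂ : ℕ) : ℝ)*μ₂) * min (((i:ℕ):ℝ)*(h₀ / (C₁:ℝ) * (1/μ₁ - 1/μ₂)) + bAux C₂ μ₁ μ₂ h₁ h₂ (ℓ-1)) 0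
          + ((k':ℕ):ℝ)*μ₁/(((k':ℕ):ℝ)*μ₁ + ((min (ℓ+1) C₂ : ℕ) : ℝ)*μ₂) * max (((i:ℕ):ℝ)*(h₀ / (C₁:ℝ) * (1/μ₁ - 1/μ₂)) + bAux C₂ μ₁ μ₂ h₁ h₂ ℓ) 0 := by
      linarith [hexp, hPb, hQb, hmono, hWc, hUsplit]
    have hC₁cast : (C₁:ℝ) = ((k':ℕ):ℝ) + 1 + ((ℓ:ℕ):ℝ) := by
      rw [← hkl]; push_cast; ring
    clear hexp hPb hQb hmono hWc hUsplit ihD E1 E2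
    -- regime split
    rcases le_or_gt C₂ ℓ with hreg | hreg
    · -- regime 1 : ℓ ≥ C₂, both service-rate minima equal C₂
      have hℓ1 : 1 ≤ ℓ := le_trans hC₂ hreg
      have hCf : ((min ℓ C₂ : ℕ) : ℝ) = (C₂:ℝ) := by rw [min_eq_right hreg]
      have hCf' : ((min (ℓ+1) C₂ : ℕ) : ℝ) = (C₂:ℝ) := by rw [min_eq_right (by omega)]
      have hb0eq : bAux C₂ μ₁ μ₂ h₁ h₂ ℓ = h₁/μ₁ - (((ℓ:ℕ):ℝ)+1)*h₂/((C₂:ℝ)*μ₂) := by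
        unfold bAux; rw [min_eq_right (by omega : C₂ ≤ ℓ+1)]
      have hbmeq : bAux C₂ μ₁ μ₂ h₁ h₂ (ℓ-1) = h₁/μ₁ - ((ℓ:ℕ):ℝ)*h₂/((C₂:ℝ)*μ₂) := by
        unfold bAux
        rw [Nat.sub_add_cancel hℓ1, min_eq_right hreg, Nat.cast_sub hℓ1]
        push_cast; ring
      rw [hCf, hCf', hb0eq, hbmeq] at hrelax
      rw [hb0eq]
      rw [hCf] at hd
      rw [hCf'] at hd'
      have hC2pos : (0:ℝ) < (C₂:ℝ) := by exact_mod_cast hC₂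
      have hqnn : (0:ℝ) ≤ h₂/((C₂:ℝ)*μ₂) := by positivity
      have hGnn' : (0:ℝ) ≤ ((k':ℕ):ℝ)*μ₁/(((k':ℕ):ℝ)*μ₁ + (C₂:ℝ)*μ₂) :=
        div_nonneg (mul_nonneg hknn hμ₁.le) hd'.le
      have hDenn' : (0:ℝ) ≤ (C₂:ℝ)*μ₂/((((k':ℕ):ℝ)+1)*μ₁ + (C₂:ℝ)*μ₂) :=
        div_nonneg (by positivity) hd.le
      have hz' : ((((k':ℕ):ℝ)+1)*μ₁/((((k':ℕ):ℝ)+1)*μ₁ + (C₂:ℝ)*μ₂)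
            - (C₂:ℝ)*μ₂/(((k':ℕ):ℝ)*μ₁ + (C₂:ℝ)*μ₂))
          + (C₂:ℝ)*μ₂/((((k':ℕ):ℝ)+1)*μ₁ + (C₂:ℝ)*μ₂)
          = ((k':ℕ):ℝ)*μ₁/(((k':ℕ):ℝ)*μ₁ + (C₂:ℝ)*μ₂) := by
        field_simp
        ring
      have hβmsplit : ((i:ℕ):ℝ)*(h₀ / (C₁:ℝ) * (1/μ₁ - 1/μ₂)) + (h₁/μ₁ - ((ℓ:ℕ):ℝ)*h₂/((C₂:ℝ)*μ₂))
          = (((i:ℕ):ℝ)*(h₀ / (C₁:ℝ) * (1/μ₁ - 1/μ₂)) + (h₁/μ₁ - (((ℓ:ℕ):ℝ)+1)*h₂/((C₂:ℝ)*μ₂))) + h₂/((C₂:ℝ)*μ₂) := by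
        ring
      rw [hβmsplit] at hrelax
      have hstep := step1
        ((((k':ℕ):ℝ)+1)*μ₁/((((k':ℕ):ℝ)+1)*μ₁ + (C₂:ℝ)*μ₂)
            - (C₂:ℝ)*μ₂/(((k':ℕ):ℝ)*μ₁ + (C₂:ℝ)*μ₂))
        (((k':ℕ):ℝ)*μ₁/(((k':ℕ):ℝ)*μ₁ + (C₂:ℝ)*μ₂))
        ((C₂:ℝ)*μ₂/((((k':ℕ):ℝ)+1)*μ₁ + (C₂:ℝ)*μ₂))
        (((i:ℕ):ℝ)*(h₀ / (C₁:ℝ) * (1/μ₁ - 1/μ₂)) + (h₁/μ₁ - (((ℓ:ℕ):ℝ)+1)*h₂/((C₂:ℝ)*μ₂)))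
        (h₂/((C₂:ℝ)*μ₂)) hGnn' hDenn' hqnn hz'
      have hdqeq : (C₂:ℝ)*μ₂/((((k':ℕ):ℝ)+1)*μ₁ + (C₂:ℝ)*μ₂) * (h₂/((C₂:ℝ)*μ₂))
          = h₂/((((k':ℕ):ℝ)+1)*μ₁ + (C₂:ℝ)*μ₂) := by
        field_simp
      have hclo := closure_reg1 ((k':ℕ):ℝ) ((ℓ:ℕ):ℝ) ((i:ℕ):ℝ) ((C₂:ℕ):ℝ) μ₁ μ₂ h₀ h₁ h₂
        hknn (Nat.cast_nonneg i) (by exact_mod_cast hC₂) (by exact_mod_cast hreg)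
        hμ₁ hμ₂ hμ hh₀ hh₂
      rw [← hC₁cast] at hclo
      linarith [hrelax, hstep, hclo, hdqeq]
    · -- regime 2 : ℓ < C₂
      have hCf : ((min ℓ C₂ : ℕ) : ℝ) = ((ℓ:ℕ):ℝ) := by rw [min_eq_left (by omega)]
      have hCf' : ((min (ℓ+1) C₂ : ℕ) : ℝ) = ((ℓ:ℕ):ℝ)+1 := by
        rw [min_eq_left (by omega)]; push_cast; ring
      have hLp1 : (0:ℝ) < ((ℓ:ℕ):ℝ)+1 := by positivity
      have hb0eq : bAux C₂ μ₁ μ₂ h₁ h₂ ℓ = h₁/μ₁ - h₂/μ₂ := by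
        unfold bAux; rw [min_eq_left (by omega : ℓ+1 ≤ C₂)]
        have h5 : ((ℓ:ℕ):ℝ)+1 ≠ 0 := by positivity
        push_cast
        field_simp
      have hbmeq : bAux C₂ μ₁ μ₂ h₁ h₂ (ℓ-1) = h₁/μ₁ - h₂/μ₂ := by
        rcases Nat.eq_zero_or_pos ℓ with h0 | h1
        · rw [h0]; unfold bAux
          rw [show (0:ℕ)-1 = 0 by omega, min_eq_left (by omega : 0+1 ≤ C₂)]
          norm_num
        · unfold bAux
          rw [Nat.sub_add_cancel h1, min_eq_left (by omega : ℓ ≤ C₂), Nat.cast_sub h1]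
          have hLpos : (0:ℝ) < ((ℓ:ℕ):ℝ) := by exact_mod_cast h1
          push_cast
          field_simp
          ring
      rw [hCf, hCf', hb0eq, hbmeq] at hrelax
      rw [hb0eq]
      rw [hCf] at hd
      rw [hCf'] at hd'
      have hGnn' : (0:ℝ) ≤ ((k':ℕ):ℝ)*μ₁/(((k':ℕ):ℝ)*μ₁ + (((ℓ:ℕ):ℝ)+1)*μ₂) :=
        div_nonneg (mul_nonneg hknn hμ₁.le) hd'.le
      have hDenn' : (0:ℝ) ≤ ((ℓ:ℕ):ℝ)*μ₂/((((k':ℕ):ℝ)+1)*μ₁ + ((ℓ:ℕ):ℝ)*μ₂) :=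
        div_nonneg (mul_nonneg (Nat.cast_nonneg ℓ) hμ₂.le) hd.le
      have hz' : ((((k':ℕ):ℝ)+1)*μ₁/((((k':ℕ):ℝ)+1)*μ₁ + ((ℓ:ℕ):ℝ)*μ₂)
            - (((ℓ:ℕ):ℝ)+1)*μ₂/(((k':ℕ):ℝ)*μ₁ + (((ℓ:ℕ):ℝ)+1)*μ₂))
          + ((ℓ:ℕ):ℝ)*μ₂/((((k':ℕ):ℝ)+1)*μ₁ + ((ℓ:ℕ):ℝ)*μ₂)
          = ((k':ℕ):ℝ)*μ₁/(((k':ℕ):ℝ)*μ₁ + (((ℓ:ℕ):ℝ)+1)*μ₂) := by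
        field_simp
        ring
      have hstep := step2
        ((((k':ℕ):ℝ)+1)*μ₁/((((k':ℕ):ℝ)+1)*μ₁ + ((ℓ:ℕ):ℝ)*μ₂)
            - (((ℓ:ℕ):ℝ)+1)*μ₂/(((k':ℕ):ℝ)*μ₁ + (((ℓ:ℕ):ℝ)+1)*μ₂))
        (((k':ℕ):ℝ)*μ₁/(((k':ℕ):ℝ)*μ₁ + (((ℓ:ℕ):ℝ)+1)*μ₂))
        (((ℓ:ℕ):ℝ)*μ₂/((((k':ℕ):ℝ)+1)*μ₁ + ((ℓ:ℕ):ℝ)*μ₂))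
        (((i:ℕ):ℝ)*(h₀ / (C₁:ℝ) * (1/μ₁ - 1/μ₂)) + (h₁/μ₁ - h₂/μ₂))
        hGnn' hDenn' hz'
      have hclo := closure_reg2 ((k':ℕ):ℝ) ((ℓ:ℕ):ℝ) ((i:ℕ):ℝ) μ₁ μ₂ h₀ h₁ h₂
        hknn (Nat.cast_nonneg ℓ) (Nat.cast_nonneg i) hμ₁ hμ₂ hμ hh₀
      rw [← hC₁cast] at hclo
      linarith [hrelax, hstep, hclo]

theorem stmt9
    (C₁ C₂ : ℕ) (hC₂pos : 1 ≤ C₂) (hC : C₂ < C₁)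
    (μ₁ μ₂ h₀ h₁ h₂ : ℝ)
    (hμ₁ : 0 < μ₁) (hμ₂ : 0 < μ₂)
    (hh₀ : 0 < h₀) (hh₁ : 0 < h₁) (hh₂ : 0 < h₂)
    (v : ℕ → ℕ → ℕ → ℝ) (hv : IsValue C₁ C₂ μ₁ μ₂ h₀ h₁ h₂ v)
    (hμ : μ₁ ≤ μ₂) :
    ∀ i k ℓ : ℕ, memX C₁ i k ℓ → 1 ≤ k →
      Dv v i k ℓ ≤
        (i : ℝ) * (h₀ / (C₁ : ℝ) * (1 / μ₁ - 1 / μ₂)) + (h₁ / μ₁ - h₂ / μ₂) := by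
  intro i k ℓ hmem hk
  have hble : bAux C₂ μ₁ μ₂ h₁ h₂ ℓ ≤ h₁/μ₁ - h₂/μ₂ := bAux_le_b hC₂pos hμ₂ hh₂ ℓ
  rcases hmem with ⟨hi0, hlt⟩ | hline
  · subst hi0
    obtain ⟨k', rfl⟩ : ∃ t, k = t + 1 := ⟨k - 1, by omega⟩
    unfold Dv
    simp only [Nat.add_sub_cancel, Nat.cast_zero, zero_mul, zero_add]
    have e1 := baseClosed C₁ C₂ μ₁ μ₂ h₀ h₁ h₂ hC₂pos hμ₁ hμ₂ v hv (k'+1+ℓ) (k'+1) ℓ rfl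
      (by omega)
    have e2 := baseClosed C₁ C₂ μ₁ μ₂ h₀ h₁ h₂ hC₂pos hμ₁ hμ₂ v hv (k'+(ℓ+1)) k' (ℓ+1) rfl
      (by omega)
    have hkey : v 0 (k'+1) ℓ - v 0 k' (ℓ+1) = bAux C₂ μ₁ μ₂ h₁ h₂ ℓ := by
      rw [e1, e2, Finset.sum_range_succ]
      unfold bAux
      push_cast
      ring
    rw [hkey]
    exact hble
  · have h := lineBound C₁ C₂ hC₂pos hC μ₁ μ₂ h₀ h₁ h₂ hμ₁ hμ₂ hh₀ hh₁ hh₂ v hv hμ i k ℓ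
      hline hk
    unfold Dv
    linarith
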